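/- Let X be a Banach space whose modulus of smoothness satisfies 2ρ(t) ≤ γ t^q for some γ > 0 and q > 1. Then with c₁ = 1/(q'·(γq)^{q'−1}) where 1/q + 1/q' = 1, for all nonzero f ∈ X and all φ ∈ X with ‖φ‖ = 1, the distance from f to the span of φ satisfies dist(f, span{φ}) ≤ ‖f‖·(1 − c₁ |F_f(φ)|^{q'}). -/

import Mathlib

open Real

theorem stmt_3 {𝕜 : Type*} [RCLike 𝕜] {X : Type*} [NormedAddCommGroup X]
    [NormedSpace 𝕜 X] [CompleteSpace X]
    (γ q q' : ℝ) (hγ : 0 < γ) (hq : 1 < q) (hq' : 1 / q + 1 / q' = 1)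
    (hρ : ∀ t : ℝ, 0 < t →
      sSup {r : ℝ | ∃ u v : X, ‖u‖ = 1 ∧ ‖v‖ = 1 ∧
        r = ‖u + (t : 𝕜) • v‖ + ‖u - (t : 𝕜) • v‖ - 2} ≤ γ * t ^ q)
    (f φ : X) (hf : f ≠ 0) (hφ : ‖φ‖ = 1)
    (F : X →L[𝕜] 𝕜) (hF : ‖F‖ = 1) (hFf : F f = (‖f‖ : 𝕜)) :
    Metric.infDist f (Submodule.span 𝕜 {φ} : Set X) ≤
      ‖f‖ * (1 - 1 / (q' * (γ * q) ^ (q' - 1)) * ‖F φ‖ ^ q') := by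
  have hq0 : (0:ℝ) < q := one_pos.trans hq
  have hq1 : (0:ℝ) < q - 1 := sub_pos.mpr hq
  have h1q' : 1/q' = (q-1)/q := by
    have h : (1:ℝ) - 1/q = (q-1)/q := by field_simp
    linarith
  have hq'pos : 0 < q' := by
    have h : 0 < 1/q' := h1q' ▸ div_pos hq1 hq0
    exact one_div_pos.mp h
  have hq'v : q' = q/(q-1) := by
    rw [← one_div_one_div q', h1q', one_div_div]
  have hkey : (q'-1)*(q-1) = 1 := by
    rw [hq'v]; field_simp; ring
  have hγq : 0 < γ * q := mul_pos hγ hq0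
  set a := ‖F φ‖ with ha
  have ha0 : 0 ≤ a := norm_nonneg _
  have hfn : (0:ℝ) < ‖f‖ := norm_pos_iff.mpr hf
  rcases eq_or_lt_of_le ha0 with h0 | hapos
  · rw [← h0, Real.zero_rpow hq'pos.ne', mul_zero, sub_zero, mul_one]
    have h0mem : (0:X) ∈ (Submodule.span 𝕜 {φ} : Set X) := Submodule.zero_mem _
    calc Metric.infDist f (Submodule.span 𝕜 {φ} : Set X) ≤ dist f 0 :=
          Metric.infDist_le_dist_of_mem h0mem
      _ = ‖f‖ := by simp
  · set t := (a/(γ*q)) ^ (q'-1) with htdef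
    have hb : 0 < a/(γ*q) := div_pos hapos hγq
    have ht : 0 < t := Real.rpow_pos_of_pos hb _
    have hane : ((a:𝕜)) ≠ 0 := by exact_mod_cast hapos.ne'
    have hfne : ((‖f‖:ℝ):𝕜) ≠ 0 := by exact_mod_cast hfn.ne'
    set θ : 𝕜 := starRingEnd 𝕜 (F φ) / (a : 𝕜) with hθ
    have hθn : ‖θ‖ = 1 := by
      rw [hθ, norm_div, RCLike.norm_conj, RCLike.norm_ofReal, abs_of_pos hapos, ← ha,
        div_self hapos.ne']
    have hθF : θ * F φ = (a : 𝕜) := by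
      rw [hθ, div_mul_eq_mul_div, RCLike.conj_mul, sq, ← ha, mul_div_assoc,
        div_self hane, mul_one]
    set u : X := ((‖f‖:ℝ):𝕜)⁻¹ • f with hu
    have hun : ‖u‖ = 1 := by
      rw [hu, norm_smul, norm_inv, RCLike.norm_ofReal, abs_of_pos hfn,
        inv_mul_cancel₀ hfn.ne']
    set v : X := θ • φ with hv
    have hvn : ‖v‖ = 1 := by rw [hv, norm_smul, hθn, hφ, one_mul]
    have hFu : F u = 1 := by
      rw [hu, map_smul, smul_eq_mul, hFf, inv_mul_cancel₀ hfne]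
    have hFv : F v = (a:𝕜) := by rw [hv, map_smul, smul_eq_mul, hθF]
    have hsmooth : ‖u + (t:𝕜)•v‖ + ‖u - (t:𝕜)•v‖ - 2 ≤ γ * t ^ q := by
      have hbdd : BddAbove {r : ℝ | ∃ u v : X, ‖u‖ = 1 ∧ ‖v‖ = 1 ∧
          r = ‖u + (t:𝕜) • v‖ + ‖u - (t:𝕜) • v‖ - 2} := by
        refine ⟨2*t, ?_⟩
        rintro r ⟨u', v', hu', hv', rfl⟩
        have hn : ‖((t:ℝ):𝕜) • v'‖ = t := by
          rw [norm_smul, RCLike.norm_ofReal, abs_of_pos ht, hv', mul_one]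
        have h1 : ‖u' + (t:𝕜)•v'‖ ≤ 1 + t := by
          calc ‖u' + (t:𝕜)•v'‖ ≤ ‖u'‖ + ‖((t:ℝ):𝕜)•v'‖ := norm_add_le _ _
            _ = 1 + t := by rw [hu', hn]
        have h2 : ‖u' - (t:𝕜)•v'‖ ≤ 1 + t := by
          calc ‖u' - (t:𝕜)•v'‖ ≤ ‖u'‖ + ‖((t:ℝ):𝕜)•v'‖ := norm_sub_le _ _
            _ = 1 + t := by rw [hu', hn]
        linarith
      have hmem : ‖u + (t:𝕜)•v‖ + ‖u - (t:𝕜)•v‖ - 2 ∈ {r : ℝ | ∃ u v : X, ‖u‖ = 1 ∧ ‖v‖ = 1 ∧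
          r = ‖u + (t:𝕜) • v‖ + ‖u - (t:𝕜) • v‖ - 2} := ⟨u, v, hun, hvn, rfl⟩
      exact le_trans (le_csSup hbdd hmem) (hρ t ht)
    have hlow : 1 + t*a ≤ ‖u + (t:𝕜)•v‖ := by
      have hop := F.le_opNorm (u + (t:𝕜)•v)
      rw [hF, one_mul] at hop
      have hFval : F (u + (t:𝕜)•v) = ((1 + t*a : ℝ) : 𝕜) := by
        rw [map_add, hFu, map_smul, smul_eq_mul, hFv]
        push_cast
        ring
      calc 1 + t*a = ‖F (u + (t:𝕜)•v)‖ := by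
            rw [hFval, RCLike.norm_ofReal, abs_of_pos (by positivity)]
        _ ≤ _ := hop
    have hup : ‖u - (t:𝕜)•v‖ ≤ 1 - t*a + γ * t^q := by linarith
    have hmem' : ((((‖f‖:ℝ):𝕜) * ((t:ℝ):𝕜) * θ) • φ) ∈ (Submodule.span 𝕜 {φ} : Set X) :=
      Submodule.smul_mem _ _ (Submodule.mem_span_singleton_self φ)
    have heq : f - ((((‖f‖:ℝ):𝕜)) * ((t:ℝ):𝕜) * θ) • φ = ((‖f‖:ℝ):𝕜) • (u - (t:𝕜)•v) := by
      rw [hu, hv, smul_sub, smul_inv_smul₀ hfne, smul_smul, smul_smul, mul_assoc]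
    have hdist : Metric.infDist f (Submodule.span 𝕜 {φ} : Set X) ≤ ‖f‖ * (1 - t*a + γ*t^q) := by
      calc Metric.infDist f (Submodule.span 𝕜 {φ} : Set X)
          ≤ dist f (((((‖f‖:ℝ):𝕜)) * ((t:ℝ):𝕜) * θ) • φ) := Metric.infDist_le_dist_of_mem hmem'
        _ = ‖f‖ * ‖u - (t:𝕜)•v‖ := by
            rw [dist_eq_norm, heq, norm_smul, RCLike.norm_ofReal, abs_of_pos hfn]
        _ ≤ _ := mul_le_mul_of_nonneg_left hup hfn.le
    have htq1 : t ^ (q-1) = a/(γ*q) := by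
      rw [htdef, ← Real.rpow_mul hb.le, hkey, Real.rpow_one]
    have htq : t ^ q = t * (a/(γ*q)) := by
      have h : t ^ q = t ^ ((1:ℝ) + (q-1)) := by norm_num
      rw [h, Real.rpow_add ht, Real.rpow_one, htq1]
    have hta : t * a = a ^ q' / (γ*q) ^ (q'-1) := by
      rw [htdef, Real.div_rpow ha0 hγq.le]
      have h : a ^ q' = a ^ (q'-1) * a := by
        rw [← Real.rpow_add_one hapos.ne' (q'-1)]; norm_num
      rw [h]; ring
    have hpow : (0:ℝ) < (γ*q) ^ (q'-1) := Real.rpow_pos_of_pos hγq _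
    have harith : t*a - γ*t^q = 1/(q'*(γ*q)^(q'-1)) * a ^ q' := by
      rw [htq]
      have hγtq : γ * (t * (a/(γ*q))) = t * a / q := by
        field_simp
      rw [hγtq, hta]
      rw [hq'v]
      field_simp
    have hfin : 1 - 1/(q'*(γ*q)^(q'-1)) * a ^ q' = 1 - t*a + γ*t^q := by linarith
    rw [hfin]
    exact hdist
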